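/- Let f(Q) = (1/2)(log det(I + H₁·Q·H₁ᵀ) − log det(I + H₂·Q·H₂ᵀ)). If H₂ᵀ·H₂ ⪰ H₁ᵀ·H₁ (i.e., H₂ᵀH₂ − H₁ᵀH₁ is positive semidefinite), then f(Q) ≤ 0 for every positive semidefinite Q. -/

import Mathlib

open Matrix

lemma one_le_det_one_add {m : ℕ} {M : Matrix (Fin m) (Fin m) ℝ} (hM : M.PosSemidef) :
    1 ≤ (1 + M).det := by
  have hA : (1 + M).IsHermitian := isHermitian_one.add hM.1
  have hdet : (1 + M).det = ∏ i, hA.eigenvalues i := by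
    simpa using hA.det_eq_prod_eigenvalues
  rw [hdet]
  have key : ∀ i ∈ Finset.univ, (1:ℝ) ≤ hA.eigenvalues i := ?_
  · calc (1:ℝ) = ∏ _i : Fin m, 1 := by simp
      _ ≤ ∏ i, hA.eigenvalues i :=
        Finset.prod_le_prod (fun _ _ => zero_le_one) key
  intro i _
  set v := ⇑(hA.eigenvectorBasis i) with hv
  have h1 : hA.eigenvalues i = star v ⬝ᵥ ((1 + M) *ᵥ v) := by
    simpa using hA.eigenvalues_eq i
  have h2 : star v ⬝ᵥ v = 1 := by
    have := hA.eigenvectorBasis.orthonormal.1 i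
    have h3 : (inner (𝕜 := ℝ) (hA.eigenvectorBasis i) (hA.eigenvectorBasis i) : ℝ) = 1 := by
      rw [real_inner_self_eq_norm_sq, this]; norm_num
    rw [← h3, EuclideanSpace.inner_eq_star_dotProduct, dotProduct_comm]
  have h4 : (0:ℝ) ≤ star v ⬝ᵥ (M *ᵥ v) := hM.dotProduct_mulVec_nonneg v
  rw [h1, add_mulVec, one_mulVec, dotProduct_add, h2]
  linarith

open scoped MatrixOrder in
lemma det_le_det_add_psd {m : ℕ} {A P : Matrix (Fin m) (Fin m) ℝ}
    (hA : A.PosDef) (hP : P.PosSemidef) : A.det ≤ (A + P).det := by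
  set S := CFC.sqrt A with hSdef
  have hSS : S * S = A := CFC.sqrt_mul_sqrt_self A hA.posSemidef.nonneg
  have hSpsd : S.PosSemidef := (CFC.sqrt_nonneg A).posSemidef
  have hdetS : S.det * S.det = A.det := by rw [← det_mul, hSS]
  have hdetA : 0 < A.det := hA.det_pos
  have hdetSne : S.det ≠ 0 := by
    intro h; rw [h, mul_zero] at hdetS; exact hdetA.ne (hdetS)
  have hunit : IsUnit S.det := isUnit_iff_ne_zero.mpr hdetSne
  have hSinv : S * S⁻¹ = 1 := mul_nonsing_inv S hunit
  have hSinv' : S⁻¹ * S = 1 := nonsing_inv_mul S hunit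
  have hSinvH : S⁻¹ᴴ = S⁻¹ := by
    rw [conjTranspose_nonsing_inv, hSpsd.1]
  set N := S⁻¹ * P * S⁻¹ with hN
  have hNpsd : N.PosSemidef := by
    have := hP.mul_mul_conjTranspose_same S⁻¹
    rwa [hSinvH] at this
  have hfact : A + P = S * (1 + N) * S := by
    rw [hN, Matrix.mul_add, Matrix.mul_one, Matrix.add_mul, hSS]
    congr 1
    calc P = (S * S⁻¹) * P * (S⁻¹ * S) := by
          rw [hSinv, hSinv', Matrix.one_mul, Matrix.mul_one]
      _ = S * (S⁻¹ * P * S⁻¹) * S := by noncomm_ring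
  calc A.det = S.det * 1 * S.det := by rw [mul_one, hdetS]
    _ ≤ S.det * (1 + N).det * S.det := by
        have h1 : (1:ℝ) ≤ (1 + N).det := one_le_det_one_add hNpsd
        have hnn : 0 ≤ S.det := by
          have hd : S.det = ∏ i, hSpsd.1.eigenvalues i := by
            simpa using hSpsd.1.det_eq_prod_eigenvalues
          rw [hd]
          exact Finset.prod_nonneg fun i _ => hSpsd.eigenvalues_nonneg i
        have h0 : 0 < S.det := lt_of_le_of_ne hnn (Ne.symm hdetSne)
        nlinarith
    _ = (A + P).det := by rw [hfact, det_mul, det_mul]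


theorem degraded_secrecy_rate_nonpos (n1 n2 nt : ℕ)
    (H1 : Matrix (Fin n1) (Fin nt) ℝ) (H2 : Matrix (Fin n2) (Fin nt) ℝ)
    (hdeg : (H2ᵀ * H2 - H1ᵀ * H1).PosSemidef) :
    ∀ Q : Matrix (Fin nt) (Fin nt) ℝ, Q.PosSemidef →
      (1 / 2) * (Real.log (1 + H1 * Q * H1ᵀ).det
        - Real.log (1 + H2 * Q * H2ᵀ).det) ≤ 0 := by
  intro Q hQ
  open scoped MatrixOrder in
  obtain ⟨B, hB⟩ := CStarAlgebra.nonneg_iff_eq_star_mul_self.mp hQ.nonneg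
  rw [star_eq_conjTranspose] at hB
  have hct : ∀ {a b : ℕ} (H : Matrix (Fin a) (Fin b) ℝ), Hᴴ = Hᵀ := by
    intro a b H; ext i j; simp [conjTranspose_apply]
  set M1 := B * (H1ᴴ * H1) * Bᴴ with hM1
  set M2 := B * (H2ᴴ * H2) * Bᴴ with hM2
  have hM1psd : M1.PosSemidef :=
    (posSemidef_conjTranspose_mul_self H1).mul_mul_conjTranspose_same B
  have hdeg' : (H2ᴴ * H2 - H1ᴴ * H1).PosSemidef := by
    rw [hct, hct]; exact hdeg
  have hPpsd : (M2 - M1).PosSemidef := by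
    have := hdeg'.mul_mul_conjTranspose_same B
    have heq : B * (H2ᴴ * H2 - H1ᴴ * H1) * Bᴴ = M2 - M1 := by
      rw [hM1, hM2]; noncomm_ring
    rwa [heq] at this
  have hd1 : (1 + H1 * Q * H1ᵀ).det = (1 + M1).det := by
    rw [hB, ← hct H1]
    calc (1 + H1 * (Bᴴ * B) * H1ᴴ).det
        = (1 + (H1 * Bᴴ) * (B * H1ᴴ)).det := by rw [Matrix.mul_assoc, Matrix.mul_assoc,
          Matrix.mul_assoc]
      _ = (1 + (B * H1ᴴ) * (H1 * Bᴴ)).det := det_one_add_mul_comm _ _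
      _ = (1 + M1).det := by rw [hM1]; simp only [Matrix.mul_assoc]
  have hd2 : (1 + H2 * Q * H2ᵀ).det = (1 + M2).det := by
    rw [hB, ← hct H2]
    calc (1 + H2 * (Bᴴ * B) * H2ᴴ).det
        = (1 + (H2 * Bᴴ) * (B * H2ᴴ)).det := by rw [Matrix.mul_assoc, Matrix.mul_assoc,
          Matrix.mul_assoc]
      _ = (1 + (B * H2ᴴ) * (H2 * Bᴴ)).det := det_one_add_mul_comm _ _
      _ = (1 + M2).det := by rw [hM2]; simp only [Matrix.mul_assoc]
  have hPD1 : (1 + M1).PosDef := Matrix.PosDef.add_posSemidef Matrix.PosDef.one hM1psd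
  have hled : (1 + M1).det ≤ (1 + M2).det := by
    have := det_le_det_add_psd hPD1 hPpsd
    have heq : (1 + M1) + (M2 - M1) = 1 + M2 := by noncomm_ring
    rwa [heq] at this
  have hlog : Real.log (1 + H1 * Q * H1ᵀ).det ≤ Real.log (1 + H2 * Q * H2ᵀ).det := by
    rw [hd1, hd2]
    exact Real.log_le_log hPD1.det_pos hled
  nlinarith
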